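/- Let H be a simple graph and let H' be obtained from H by inserting one new edge {u,v} (where u and v are vertices of H). Then the number of maximal paths of H' is at most the number of maximal paths of H plus five. -/

import Mathlib

/-- The degree of a vertex (number of neighbors). -/
noncomputable def deg {V : Type*} (G : SimpleGraph V) (w : V) : ℕ :=
  (G.neighborSet w).ncard

/-- A maximal path: a path on at least two vertices (at least one edge) all of whose inner
vertices have degree exactly two in G, whose endpoints each have degree at least three or
exactly two in G but not both degree two, and which cannot be extended at a degree-two
endpoint. -/
def IsMaximalPath {V : Type*} (G : SimpleGraph V) {u v : V} (p : G.Walk u v) : Prop :=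
  p.IsPath ∧ 1 ≤ p.length ∧
  (∀ w ∈ p.support, w ≠ u → w ≠ v → deg G w = 2) ∧
  ((3 ≤ deg G u ∧ 3 ≤ deg G v) ∨ (3 ≤ deg G u ∧ deg G v = 2) ∨
    (deg G u = 2 ∧ 3 ≤ deg G v)) ∧
  (deg G u = 2 → ∀ x : V, G.Adj u x → x ∈ p.support) ∧
  (deg G v = 2 → ∀ x : V, G.Adj v x → x ∈ p.support)

/-- The set of maximal paths of G, where each (undirected) maximal path is represented by
its set of edges. -/
def maximalPathEdgeSets {V : Type*} (G : SimpleGraph V) : Set (Set (Sym2 V)) :=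
  {s | ∃ (u v : V) (p : G.Walk u v), IsMaximalPath G p ∧ s = {e | e ∈ p.edges}}

namespace MPaux

variable {V : Type*}

/-- list of consecutive-pair edges of a vertex list -/
def pl : List V → List (Sym2 V)
  | [] => []
  | [_] => []
  | a :: b :: l => s(a, b) :: pl (b :: l)

@[simp] lemma pl_nil : pl ([] : List V) = [] := rfl
@[simp] lemma pl_single (a : V) : pl [a] = [] := rfl
@[simp] lemma pl_cons₂ (a b : V) (l : List V) : pl (a :: b :: l) = s(a, b) :: pl (b :: l) := rfl

lemma mem_pl_of_split {l l₁ l₂ : List V} {a b : V} (h : l = l₁ ++ a :: b :: l₂) :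
    s(a, b) ∈ pl l := by
  subst h
  induction l₁ with
  | nil => simp
  | cons c l₁ ih =>
    cases l₁ with
    | nil => simp [ih]
    | cons d l₁ => simpa using Or.inr ih

lemma split_of_mem_pl {l : List V} {e : Sym2 V} (h : e ∈ pl l) :
    ∃ (l₁ : List V) (a b : V) (l₂ : List V), l = l₁ ++ a :: b :: l₂ ∧ e = s(a, b) := by
  induction l with
  | nil => simp [pl] at h
  | cons c l ih =>
    cases l with
    | nil => simp [pl] at h
    | cons d l =>
      rcases (by simpa using h : e = s(c, d) ∨ e ∈ pl (d :: l)) with h' | h'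
      · exact ⟨[], c, d, l, rfl, h'⟩
      · obtain ⟨l₁, a, b, l₂, hsplit, he⟩ := ih h'
        exact ⟨c :: l₁, a, b, l₂, by simp [hsplit], he⟩

lemma mem_pl_reverse {l : List V} {e : Sym2 V} : e ∈ pl l.reverse ↔ e ∈ pl l := by
  have key : ∀ (m : List V) (f : Sym2 V), f ∈ pl m → f ∈ pl m.reverse := by
    intro m f hf
    obtain ⟨l₁, a, b, l₂, hsplit, he⟩ := split_of_mem_pl hf
    have : m.reverse = l₂.reverse ++ b :: a :: l₁.reverse := by
      subst hsplit; simp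
    have := mem_pl_of_split this
    rwa [he, Sym2.eq_swap]
  constructor
  · intro h; simpa using key _ _ h
  · exact key l e

variable [Fintype V]

/-- Maximal path, list form. -/
structure MP (G : SimpleGraph V) (a b : V) (l : List V) : Prop where
  chain : l.Chain' G.Adj
  nodup : l.Nodup
  hd : l.head? = some a
  lst : l.getLast? = some b
  len : 2 ≤ l.length
  inner : ∀ w ∈ l, w ≠ a → w ≠ b → deg G w = 2
  pair : (3 ≤ deg G a ∧ 3 ≤ deg G b) ∨ (3 ≤ deg G a ∧ deg G b = 2) ∨
    (deg G a = 2 ∧ 3 ≤ deg G b)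
  closA : deg G a = 2 → ∀ x, G.Adj a x → x ∈ l
  closB : deg G b = 2 → ∀ x, G.Adj b x → x ∈ l

lemma walk_edges_eq_pl {G : SimpleGraph V} {a b : V} (p : G.Walk a b) :
    p.edges = pl p.support := by
  induction p with
  | nil => rfl
  | cons h q ih =>
    have hq : q.support = _ :: q.support.tail := q.support_eq_cons
    rw [SimpleGraph.Walk.edges_cons, SimpleGraph.Walk.support_cons, ih, hq]
    rfl

lemma mp_of_isMaximalPath {G : SimpleGraph V} {a b : V} {p : G.Walk a b}
    (h : IsMaximalPath G p) : MP G a b p.support := by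
  obtain ⟨hpath, hlen, hinner, hpair, hclosA, hclosB⟩ := h
  refine ⟨p.isChain_adj_support, hpath.support_nodup, ?_, ?_, ?_, hinner, hpair, hclosA, hclosB⟩
  · rw [List.head?_eq_head p.support_ne_nil, p.head_support]
  · rw [List.getLast?_eq_getLast p.support_ne_nil, p.getLast_support]
  · rw [SimpleGraph.Walk.length_support]; omega

lemma MP.reverse {G : SimpleGraph V} {a b : V} {l : List V} (h : MP G a b l) :
    MP G b a l.reverse := by
  obtain ⟨hc, hn, hh, hl, hlen, hi, hp, cA, cB⟩ := h
  refine ⟨?_, by simpa using hn, by simpa using hl, by simpa using hh, by simpa using hlen,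
    ?_, by tauto, fun h2 x hx => by simpa using cB h2 x hx,
    fun h2 x hx => by simpa using cA h2 x hx⟩
  · refine List.isChain_reverse.mpr ?_
    exact List.IsChain.imp (fun a b hab => SimpleGraph.Adj.symm hab) hc
  · intro w hw hwb hwa
    exact hi w (by simpa using hw) hwa hwb

set_option linter.unusedSectionVars false

lemma MP.inner_split {G : SimpleGraph V} {a b w : V} {l l₁ l₂ : List V} (h : MP G a b l)
    (he : l = l₁ ++ w :: l₂) (h1 : l₁ ≠ []) (h2 : l₂ ≠ []) : deg G w = 2 := by
  subst he
  have hnd := h.nodup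
  rw [List.nodup_append] at hnd
  obtain ⟨nd1, nd2, disj⟩ := hnd
  have ha : a ∈ l₁ := by
    have hh := h.hd
    rw [List.head?_append_of_ne_nil _ h1] at hh
    exact List.mem_of_mem_head? hh
  have hwa : w ≠ a := by
    rintro rfl
    exact disj _ ha _ (by simp) rfl
  have hb : b ∈ l₂ := by
    have hl := h.lst
    rw [List.getLast?_append_of_ne_nil _ (by simp : w :: l₂ ≠ []),
      show w :: l₂ = [w] ++ l₂ from rfl, List.getLast?_append_of_ne_nil _ h2] at hl
    exact List.mem_of_mem_getLast? hl
  have hwb : w ≠ b := by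
    rintro rfl
    exact (List.nodup_cons.mp nd2).1 hb
  exact h.inner w (by simp) hwa hwb

lemma nbr2 {G : SimpleGraph V} {w p n₁ n₂ : V} (hdeg : deg G w = 2)
    (hp : G.Adj w p) (h1 : G.Adj w n₁) (h2 : G.Adj w n₂) (h1p : n₁ ≠ p) (h2p : n₂ ≠ p) :
    n₁ = n₂ := by
  have hsub : ({p, n₁} : Set V) ⊆ G.neighborSet w := by
    rintro x (rfl | rfl) <;> assumption
  have hcard : ({p, n₁} : Set V).ncard = 2 := Set.ncard_pair (Ne.symm h1p)
  have : ({p, n₁} : Set V) = G.neighborSet w :=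
    Set.eq_of_subset_of_ncard_le hsub (by rw [hcard]; exact (hdeg).le) (Set.toFinite _)
  have : n₂ ∈ ({p, n₁} : Set V) := this ▸ h2
  rcases this with rfl | rfl
  · exact absurd rfl h2p
  · rfl

lemma pc {G : SimpleGraph V} (t₁ : List V) : ∀ {t₂ h₁ h₂ : List V} {p y a₁ b₁ a₂ b₂ : V},
    MP G a₁ b₁ (h₁ ++ p :: y :: t₁) → MP G a₂ b₂ (h₂ ++ p :: y :: t₂) →
    t₁ <+: t₂ ∨ t₂ <+: t₁ := by
  induction t₁ with
  | nil => intro t₂ _ _ _ _ _ _ _ _ _ _; exact Or.inl (List.nil_prefix)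
  | cons n₁ t₁' ih =>
    intro t₂ h₁ h₂ p y a₁ b₁ a₂ b₂ m1 m2
    cases t₂ with
    | nil => exact Or.inr (List.nil_prefix)
    | cons n₂ t₂' =>
      -- y is interior in both, with predecessor p; forced next vertex
      have hdegy : deg G y = 2 :=
        m1.inner_split (l₁ := h₁ ++ [p]) (l₂ := n₁ :: t₁') (by simp) (by simp) (by simp)
      have hchain1 : (p :: y :: n₁ :: t₁').Chain' G.Adj :=
        ((List.isChain_append.mp m1.chain).2).1
      have hchain2 : (p :: y :: n₂ :: t₂').Chain' G.Adj :=
        ((List.isChain_append.mp m2.chain).2).1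
      have hpy : G.Adj p y := (List.isChain_cons_cons.mp hchain1).1
      have hyn₁ : G.Adj y n₁ := (List.isChain_cons_cons.mp (List.isChain_cons_cons.mp hchain1).2).1
      have hyn₂ : G.Adj y n₂ := (List.isChain_cons_cons.mp (List.isChain_cons_cons.mp hchain2).2).1
      have hnd1 : (p :: y :: n₁ :: t₁').Nodup := m1.nodup.of_append_right
      have hnd2 : (p :: y :: n₂ :: t₂').Nodup := m2.nodup.of_append_right
      have hn₁p : n₁ ≠ p := by
        intro h; subst h; simp [List.nodup_cons] at hnd1
      have hn₂p : n₂ ≠ p := by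
        intro h; subst h; simp [List.nodup_cons] at hnd2
      have : n₁ = n₂ := nbr2 hdegy hpy.symm hyn₁ hyn₂ hn₁p hn₂p
      subst this
      have m1' : MP G a₁ b₁ ((h₁ ++ [p]) ++ y :: n₁ :: t₁') := by simpa using m1
      have m2' : MP G a₂ b₂ ((h₂ ++ [p]) ++ y :: n₁ :: t₂') := by simpa using m2
      rcases ih m1' m2' with h | h
      · exact Or.inl (List.cons_prefix_cons.mpr ⟨rfl, h⟩)
      · exact Or.inr (List.cons_prefix_cons.mpr ⟨rfl, h⟩)

/-- a maximal path cannot be a proper prefix of another maximal path -/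
lemma noext {G : SimpleGraph V} {a b a' b' n : V} {l r : List V}
    (h1 : MP G a b l) (h2 : MP G a' b' (l ++ n :: r)) : False := by
  have hne : l ≠ [] := by intro h; subst h; simpa using h1.len
  have hbl : l.getLast hne = b := by
    have := h1.lst
    rw [List.getLast?_eq_getLast_of_ne_nil hne] at this
    exact Option.some_injective _ this
  have hsplit : l ++ n :: r = l.dropLast ++ b :: n :: r := by
    conv_lhs => rw [← List.dropLast_append_getLast hne, hbl]
    simp
  have hdegb : deg G b = 2 := by
    refine h2.inner_split hsplit ?_ (by simp)
    intro hnil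
    have h3 := List.length_dropLast (xs := l)
    rw [hnil] at h3
    have h4 := h1.len
    simp at h3
    omega
  have hadj : G.Adj b n := by
    have := (List.isChain_append.mp h2.chain).2.2
    refine this b ?_ n (by simp)
    rw [List.getLast?_eq_getLast_of_ne_nil hne, hbl]
    rfl
  have hmem : n ∈ l := h1.closB hdegb n hadj
  have := h2.nodup
  rw [List.nodup_append] at this
  exact this.2.2 _ hmem _ (by simp) rfl

lemma same_h {G : SimpleGraph V} {h t₁ t₂ : List V} {p y a₁ b₁ a₂ b₂ : V}
    (m1 : MP G a₁ b₁ (h ++ p :: y :: t₁)) (m2 : MP G a₂ b₂ (h ++ p :: y :: t₂)) :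
    t₁ = t₂ := by
  rcases pc t₁ m1 m2 with hpre | hpre
  · obtain ⟨r, rfl⟩ := hpre
    cases r with
    | nil => simp
    | cons n r' =>
      exact absurd (noext m1 (by simpa using m2 : MP G a₂ b₂ ((h ++ p :: y :: t₁) ++ n :: r'))) id
  · obtain ⟨r, rfl⟩ := hpre
    cases r with
    | nil => simp
    | cons n r' =>
      exact absurd (noext m2 (by simpa using m1 : MP G a₁ b₁ ((h ++ p :: y :: t₂) ++ n :: r'))) id

lemma stepA {G : SimpleGraph V} {u v a₁ b₁ a₂ b₂ c : V} {h₁ q t₁ t₂ : List V}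
    (m1 : MP G a₁ b₁ (h₁ ++ u :: v :: t₁))
    (m2 : MP G a₂ b₂ ((q ++ c :: h₁) ++ u :: v :: t₂)) :
    deg G a₁ = 2 ∧ c ∈ t₁ ∧ c ∉ t₂ := by
  obtain ⟨e, rest, hsplit⟩ : ∃ e rest, h₁ ++ [u] = e :: rest := by
    cases h₁ with
    | nil => exact ⟨u, [], rfl⟩
    | cons x xs => exact ⟨x, xs ++ [u], by simp⟩
  have hl1 : h₁ ++ u :: v :: t₁ = e :: (rest ++ v :: t₁) := by
    rw [show h₁ ++ u :: v :: t₁ = (h₁ ++ [u]) ++ v :: t₁ by simp, hsplit]; rfl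
  have hl2 : (q ++ c :: h₁) ++ u :: v :: t₂ = (q ++ [c]) ++ e :: (rest ++ v :: t₂) := by
    rw [show (q ++ c :: h₁) ++ u :: v :: t₂ = (q ++ [c]) ++ ((h₁ ++ [u]) ++ v :: t₂) by simp,
      hsplit]; rfl
  have hae : a₁ = e := by
    have := m1.hd
    rw [hl1] at this
    simpa using this.symm
  have hdege : deg G e = 2 := m2.inner_split hl2 (by simp) (by simp)
  have hadjce : G.Adj c e := by
    have := (List.isChain_append.mp (hl2 ▸ m2.chain)).2.2
    refine this c ?_ e (by simp)
    simp
  have hcl1 : c ∈ h₁ ++ u :: v :: t₁ := by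
    rw [hl1]
    rcases m1.closA (hae ▸ hdege) c (hae ▸ hadjce.symm) with h
    rwa [hl1] at h
  have hnd : (c :: (h₁ ++ u :: v :: t₂)).Nodup := by
    have := m2.nodup
    rw [show (q ++ c :: h₁) ++ u :: v :: t₂ = q ++ (c :: (h₁ ++ u :: v :: t₂)) by simp] at this
    exact this.of_append_right
  have hcnot : c ∉ h₁ ++ u :: v :: t₂ := (List.nodup_cons.mp hnd).1
  have hct₁ : c ∈ t₁ := by
    rcases List.mem_append.mp hcl1 with h | h
    · exact absurd (by simp [h] : c ∈ h₁ ++ u :: v :: t₂) hcnot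
    · rcases List.mem_cons.mp h with hcu | h'
      · exact absurd (by simp [hcu] : c ∈ h₁ ++ u :: v :: t₂) hcnot
      · rcases List.mem_cons.mp h' with hcv | h''
        · exact absurd (by simp [hcv] : c ∈ h₁ ++ u :: v :: t₂) hcnot
        · exact h''
  exact ⟨hae ▸ hdege, hct₁, fun h => hcnot (by simp [h])⟩

lemma three_aux {G : SimpleGraph V} {u v : V} {h₁ h₂ h₃ t₁ t₂ t₃ : List V}
    {a₁ b₁ a₂ b₂ a₃ b₃ : V}
    (m1 : MP G a₁ b₁ (h₁ ++ u :: v :: t₁)) (m2 : MP G a₂ b₂ (h₂ ++ u :: v :: t₂))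
    (m3 : MP G a₃ b₃ (h₃ ++ u :: v :: t₃))
    (h12 : ∃ q c, h₂ = q ++ c :: h₁) (h23 : ∃ q c, h₃ = q ++ c :: h₂) : False := by
  obtain ⟨q, c, rfl⟩ := h12
  obtain ⟨q', c', rfl⟩ := h23
  obtain ⟨_, hct₁, hct₂⟩ := stepA m1 m2
  obtain ⟨hdega₂, _, _⟩ := stepA m2 m3
  -- t₂ is a proper prefix of t₁
  have hpre : t₂ <+: t₁ := by
    rcases pc t₁ m1 m2 with h | h
    · exact absurd (h.subset hct₁) hct₂
    · exact h
  obtain ⟨r, hr⟩ := hpre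
  have hrne : r ≠ [] := by
    rintro rfl
    simp at hr
    exact hct₂ (hr ▸ hct₁)
  obtain ⟨d, r', rfl⟩ : ∃ d r', r = d :: r' := by
    cases r with
    | nil => exact absurd rfl hrne
    | cons d r' => exact ⟨d, r', rfl⟩
  -- the last vertex of l₂ : gl := (v :: t₂).getLast
  have hvt₂ : (v :: t₂ : List V) ≠ [] := by simp
  set gl := (v :: t₂).getLast hvt₂ with hgl
  have hb₂ : b₂ = gl := by
    have := m2.lst
    rw [List.getLast?_append_of_ne_nil _ (by simp : u :: v :: t₂ ≠ ([] : List V)),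
      show (u :: v :: t₂ : List V) = [u] ++ v :: t₂ by rfl,
      List.getLast?_append_of_ne_nil _ hvt₂,
      List.getLast?_eq_getLast_of_ne_nil hvt₂] at this
    simpa using (Option.some_injective _ this).symm
  -- gl is interior in l₁
  have hsplit1 : h₁ ++ u :: v :: t₁ =
      (h₁ ++ [u] ++ (v :: t₂).dropLast) ++ gl :: (d :: r') := by
    have : (v :: t₂) ++ d :: r' = ((v :: t₂).dropLast ++ [gl]) ++ d :: r' := by
      rw [List.dropLast_append_getLast hvt₂]
    calc h₁ ++ u :: v :: t₁ = h₁ ++ [u] ++ ((v :: t₂) ++ d :: r') := by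
          rw [← hr]; simp
      _ = _ := by rw [this]; simp
  have hdeggl : deg G gl = 2 := m1.inner_split hsplit1 (by simp) (by simp)
  have := m2.pair
  rw [hdega₂, hb₂, hdeggl] at this
  omega

def pset (l : List V) : Set (Sym2 V) := {e | e ∈ pl l}

lemma pset_reverse (l : List V) : pset l.reverse = pset l :=
  Set.ext fun _ => mem_pl_reverse

lemma rev_pattern {u v : V} (h t : List V) :
    (h ++ u :: v :: t).reverse = t.reverse ++ v :: u :: h.reverse := by simp

lemma pair_rel {G : SimpleGraph V} {u v a₁ b₁ a₂ b₂ : V} {h₁ t₁ h₂ t₂ : List V}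
    (m1 : MP G a₁ b₁ (h₁ ++ u :: v :: t₁)) (m2 : MP G a₂ b₂ (h₂ ++ u :: v :: t₂))
    (hne : pset (h₁ ++ u :: v :: t₁) ≠ pset (h₂ ++ u :: v :: t₂)) :
    (∃ q c, h₂ = q ++ c :: h₁) ∨ (∃ q c, h₁ = q ++ c :: h₂) := by
  have m1r : MP G b₁ a₁ (t₁.reverse ++ v :: u :: h₁.reverse) := by
    have := m1.reverse
    rwa [rev_pattern] at this
  have m2r : MP G b₂ a₂ (t₂.reverse ++ v :: u :: h₂.reverse) := by
    have := m2.reverse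
    rwa [rev_pattern] at this
  have key : ∀ (x y : List V), x.reverse <+: y.reverse → x ≠ y →
      ∃ q c, y = q ++ c :: x := by
    intro x y hpre hxy
    obtain ⟨r, hr⟩ := hpre
    cases r with
    | nil =>
      simp at hr
      exact absurd hr hxy
    | cons c r' =>
      refine ⟨r'.reverse, c, ?_⟩
      have : y = (x.reverse ++ c :: r').reverse := by rw [hr]; simp
      rw [this]
      simp
  have hne' : h₁ ≠ h₂ := by
    rintro rfl
    exact hne (by rw [same_h m1 m2])
  rcases pc h₁.reverse m1r m2r with h | h
  · exact Or.inl (key h₁ h₂ h hne')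
  · exact Or.inr (key h₂ h₁ h (Ne.symm hne'))

lemma rlen {h h' : List V} (hr : ∃ q c, h' = q ++ c :: h) : h.length < h'.length := by
  obtain ⟨q, c, rfl⟩ := hr
  simp
  omega

lemma Acard (G : SimpleGraph V) (u v : V) :
    {s : Set (Sym2 V) | ∃ (a b : V) (h t : List V),
      MP G a b (h ++ u :: v :: t) ∧ s = pset (h ++ u :: v :: t)}.ncard ≤ 2 := by
  by_contra hlt
  push_neg at hlt
  obtain ⟨s₁, s₂, s₃, hs₁, hs₂, hs₃, h12, h13, h23⟩ :=
    (Set.two_lt_ncard_iff (Set.toFinite _)).mp hlt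
  obtain ⟨a₁, b₁, h₁, t₁, m1, rfl⟩ := hs₁
  obtain ⟨a₂, b₂, h₂, t₂, m2, rfl⟩ := hs₂
  obtain ⟨a₃, b₃, h₃, t₃, m3, rfl⟩ := hs₃
  have r12 := pair_rel m1 m2 h12
  have r13 := pair_rel m1 m3 h13
  have r23 := pair_rel m2 m3 h23
  rcases r12 with r12 | r21
  · rcases r23 with r23 | r32
    · exact three_aux m1 m2 m3 r12 r23
    · rcases r13 with r13 | r31
      · exact three_aux m1 m3 m2 r13 r32
      · exact three_aux m3 m1 m2 r31 r12
  · rcases r13 with r13 | r31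
    · exact three_aux m2 m1 m3 r21 r13
    · rcases r23 with r23 | r32
      · exact three_aux m2 m3 m1 r23 r31
      · exact three_aux m3 m2 m1 r32 r21

section Main

variable {G : SimpleGraph V}

open SimpleGraph

lemma adj_iff (H : SimpleGraph V) (u v : V) (hne : u ≠ v) {a b : V} :
    (H ⊔ SimpleGraph.fromEdgeSet {s(u, v)}).Adj a b ↔
      H.Adj a b ∨ (a = u ∧ b = v) ∨ (a = v ∧ b = u) := by
  rw [SimpleGraph.sup_adj, SimpleGraph.fromEdgeSet_adj]
  constructor
  · rintro (h | ⟨h, hab⟩)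
    · exact Or.inl h
    · rw [Set.mem_singleton_iff, Sym2.eq_iff] at h
      tauto
  · rintro (h | ⟨rfl, rfl⟩ | ⟨rfl, rfl⟩)
    · exact Or.inl h
    · exact Or.inr ⟨by simp, hne⟩
    · exact Or.inr ⟨by rw [Sym2.eq_swap]; simp, hne.symm⟩

lemma nbhd_other (H : SimpleGraph V) (u v : V) (hne : u ≠ v) {w : V}
    (hwu : w ≠ u) (hwv : w ≠ v) :
    (H ⊔ SimpleGraph.fromEdgeSet {s(u, v)}).neighborSet w = H.neighborSet w := by
  ext x
  simp only [SimpleGraph.mem_neighborSet]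
  rw [adj_iff H u v hne]
  constructor
  · rintro (h | ⟨rfl, rfl⟩ | ⟨rfl, rfl⟩)
    · exact h
    · exact absurd rfl hwu
    · exact absurd rfl hwv
  · exact Or.inl

lemma deg_other (H : SimpleGraph V) (u v : V) (hne : u ≠ v) {w : V}
    (hwu : w ≠ u) (hwv : w ≠ v) :
    deg (H ⊔ SimpleGraph.fromEdgeSet {s(u, v)}) w = deg H w := by
  unfold deg
  rw [nbhd_other H u v hne hwu hwv]

lemma nbhd_u (H : SimpleGraph V) (u v : V) (hne : u ≠ v) :
    (H ⊔ SimpleGraph.fromEdgeSet {s(u, v)}).neighborSet u = insert v (H.neighborSet u) := by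
  ext x
  simp only [SimpleGraph.mem_neighborSet, Set.mem_insert_iff]
  rw [adj_iff H u v hne]
  constructor
  · rintro (h | ⟨-, rfl⟩ | ⟨rfl, rfl⟩)
    · exact Or.inr h
    · exact Or.inl rfl
    · exact absurd rfl hne
  · rintro (rfl | h)
    · exact Or.inr (Or.inl ⟨rfl, rfl⟩)
    · exact Or.inl h

lemma deg_u (H : SimpleGraph V) (u v : V) (hne : u ≠ v) (hnadj : ¬H.Adj u v) :
    deg (H ⊔ SimpleGraph.fromEdgeSet {s(u, v)}) u = deg H u + 1 := by
  unfold deg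
  rw [nbhd_u H u v hne, Set.ncard_insert_of_notMem (by simpa using hnadj) (Set.toFinite _)]

lemma sup_comm' (H : SimpleGraph V) (u v : V) :
    H ⊔ SimpleGraph.fromEdgeSet {s(u, v)} = H ⊔ SimpleGraph.fromEdgeSet {s(v, u)} := by
  rw [Sym2.eq_swap]

lemma transfer_max (H : SimpleGraph V) (u v : V) (hne : u ≠ v) (hnadj : ¬H.Adj u v) {a b : V}
    {p : (H ⊔ SimpleGraph.fromEdgeSet {s(u, v)}).Walk a b}
    (hmax : IsMaximalPath (H ⊔ SimpleGraph.fromEdgeSet {s(u, v)}) p)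
    (huv : s(u, v) ∉ p.edges)
    (hu : u ∈ p.support → (u = a ∨ u = b) ∧ 3 ≤ deg H u)
    (hv : v ∈ p.support → (v = a ∨ v = b) ∧ 3 ≤ deg H v) :
    {e | e ∈ p.edges} ∈ maximalPathEdgeSets H := by
  have hsub : ∀ e ∈ p.edges, e ∈ H.edgeSet := by
    intro e he
    have hG : e ∈ (H ⊔ SimpleGraph.fromEdgeSet {s(u, v)}).edgeSet := p.edges_subset_edgeSet he
    induction e with
    | h x y =>
      rw [SimpleGraph.mem_edgeSet] at hG ⊢
      rcases (adj_iff H u v hne).mp hG with h | ⟨rfl, rfl⟩ | ⟨rfl, rfl⟩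
      · exact h
      · exact absurd he huv
      · exfalso
        refine huv (Eq.mp ?_ he)
        congr 1
        exact Sym2.eq_swap
  obtain ⟨hpath, hlen, hinner, hpair, hclosA, hclosB⟩ := hmax
  have hdeg : ∀ w, w ≠ u → w ≠ v →
      deg H w = deg (H ⊔ SimpleGraph.fromEdgeSet {s(u, v)}) w :=
    fun w h1 h2 => (deg_other H u v hne h1 h2).symm
  have hda : deg H a = deg (H ⊔ SimpleGraph.fromEdgeSet {s(u, v)}) a ∨ 3 ≤ deg H a := by
    by_cases h1 : a = u
    · subst h1; exact Or.inr (hu p.start_mem_support).2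
    by_cases h2 : a = v
    · subst h2; exact Or.inr (hv p.start_mem_support).2
    · exact Or.inl (hdeg a h1 h2)
  have hdb : deg H b = deg (H ⊔ SimpleGraph.fromEdgeSet {s(u, v)}) b ∨ 3 ≤ deg H b := by
    by_cases h1 : b = u
    · subst h1; exact Or.inr (hu p.end_mem_support).2
    by_cases h2 : b = v
    · subst h2; exact Or.inr (hv p.end_mem_support).2
    · exact Or.inl (hdeg b h1 h2)
  refine ⟨a, b, p.transfer H hsub, ⟨hpath.transfer hsub, ?_, ?_, ?_, ?_, ?_⟩, ?_⟩
  · rwa [SimpleGraph.Walk.length_transfer]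
  · intro w hw hwa hwb
    rw [SimpleGraph.Walk.support_transfer] at hw
    have hwu : w ≠ u := by
      rintro rfl
      rcases (hu hw).1 with h | h
      · exact hwa h
      · exact hwb h
    have hwv : w ≠ v := by
      rintro rfl
      rcases (hv hw).1 with h | h
      · exact hwa h
      · exact hwb h
    rw [hdeg w hwu hwv]
    exact hinner w hw hwa hwb
  · rcases hda with hda | hda <;> rcases hdb with hdb | hdb <;> omega
  · intro h2 x hx
    have hau : a ≠ u := by rintro rfl; have := (hu p.start_mem_support).2; omega
    have hav : a ≠ v := by rintro rfl; have := (hv p.start_mem_support).2; omega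
    rw [SimpleGraph.Walk.support_transfer]
    exact hclosA (by rw [← hdeg a hau hav]; exact h2) x
      ((SimpleGraph.sup_adj _ _ _ _).mpr (Or.inl hx))
  · intro h2 x hx
    have hbu : b ≠ u := by rintro rfl; have := (hu p.end_mem_support).2; omega
    have hbv : b ≠ v := by rintro rfl; have := (hv p.end_mem_support).2; omega
    rw [SimpleGraph.Walk.support_transfer]
    exact hclosB (by rw [← hdeg b hbu hbv]; exact h2) x
      ((SimpleGraph.sup_adj _ _ _ _).mpr (Or.inl hx))
  · ext e
    simp [SimpleGraph.Walk.edges_transfer]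

def Abkt (G : SimpleGraph V) (u v : V) : Set (Set (Sym2 V)) :=
  {s | ∃ (a b : V) (h t : List V), MP G a b (h ++ u :: v :: t) ∧ s = pset (h ++ u :: v :: t)}

def germ (G : SimpleGraph V) (w x : V) : Set (Set (Sym2 V)) :=
  {s | ∃ (b : V) (t : List V), MP G w b (w :: x :: t) ∧ s = pset (w :: x :: t)}

lemma germ_sub (G : SimpleGraph V) (w x : V) : (germ G w x).Subsingleton := by
  rintro s₁ ⟨b₁, t₁, m1, rfl⟩ s₂ ⟨b₂, t₂, m2, rfl⟩
  have h : t₁ = t₂ := same_h (h := ([] : List V)) (p := w) (y := x) m1 m2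
  rw [h]

lemma int_mem {G : SimpleGraph V} {a b w z : V} {l l₁ l₂ : List V} (m : MP G a b l)
    (he : l = l₁ ++ w :: l₂) (h1 : l₁ ≠ []) (h2 : l₂ ≠ []) (hz : G.Adj w z) :
    s(w, z) ∈ pl l := by
  have hdeg : deg G w = 2 := m.inner_split he h1 h2
  obtain ⟨y, l₂', rfl⟩ : ∃ y l₂', l₂ = y :: l₂' := by
    cases l₂ with
    | nil => exact absurd rfl h2
    | cons y l₂' => exact ⟨y, l₂', rfl⟩
  have hch := m.chain
  rw [he] at hch
  obtain ⟨ch1, ch2, ch3⟩ := List.isChain_append.mp hch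
  have hadjwy : G.Adj w y := (List.isChain_cons_cons.mp ch2).1
  have hp' : G.Adj (l₁.getLast h1) w := by
    refine ch3 _ ?_ w (by simp)
    rw [List.getLast?_eq_getLast_of_ne_nil h1]
    rfl
  have hnd := m.nodup
  rw [he, List.nodup_append] at hnd
  have hpy : l₁.getLast h1 ≠ y := by
    intro hq
    exact hnd.2.2 _ (List.getLast_mem h1) _ (by simp [hq]) rfl
  by_cases hzp : z = l₁.getLast h1
  · have hl₁ : l₁ = l₁.dropLast ++ [z] := by
      rw [hzp]
      exact (List.dropLast_append_getLast h1).symm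
    have hsplit : l = l₁.dropLast ++ z :: w :: y :: l₂' := by
      rw [he]
      conv_lhs => rw [hl₁]
      simp
    have hmem := mem_pl_of_split hsplit
    rw [show s(w, z) = s(z, w) from Sym2.eq_swap]
    exact hmem
  · have hyz : y = z := nbr2 hdeg hp'.symm hadjwy hz (Ne.symm hpy) hzp
    subst hyz
    exact mem_pl_of_split he

lemma second {G : SimpleGraph V} {a b : V} {l : List V} (m : MP G a b l) :
    ∃ x t, l = a :: x :: t := by
  obtain ⟨c, l', rfl⟩ : ∃ c l', l = c :: l' := by
    cases l with
    | nil => exact absurd m.len (by simp)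
    | cons c l' => exact ⟨c, l', rfl⟩
  have hc : c = a := by simpa using m.hd
  subst hc
  cases l' with
  | nil => exact absurd m.len (by simp)
  | cons x t => exact ⟨x, t, rfl⟩

lemma to_A {G : SimpleGraph V} {u v a b : V} {l : List V} (m : MP G a b l)
    (huv : s(u, v) ∈ pl l) : pset l ∈ Abkt G u v := by
  obtain ⟨l₁, x, y, l₂, hsplit, he⟩ := split_of_mem_pl huv
  rcases Sym2.eq_iff.mp he with ⟨hx, hy⟩ | ⟨hx, hy⟩
  · subst hx; subst hy
    exact ⟨a, b, l₁, l₂, hsplit ▸ m, by rw [hsplit]⟩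
  · subst hx; subst hy
    have hrev : l.reverse = l₂.reverse ++ u :: v :: l₁.reverse := by
      rw [hsplit]; simp
    refine ⟨b, a, l₂.reverse, l₁.reverse, hrev ▸ m.reverse, ?_⟩
    rw [← hrev, pset_reverse]

lemma isMaximalPath_reverse {G : SimpleGraph V} {a b : V} {p : G.Walk a b}
    (h : IsMaximalPath G p) : IsMaximalPath G p.reverse := by
  obtain ⟨hpath, hlen, hinner, hpair, cA, cB⟩ := h
  refine ⟨hpath.reverse, by simpa using hlen, ?_, by tauto, ?_, ?_⟩
  · intro w hw h1 h2
    exact hinner w (by simpa using hw) h2 h1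
  · intro h2 x hx
    simpa using cB h2 x hx
  · intro h2 x hx
    simpa using cA h2 x hx

lemma swap_mem_pl {w z : V} {l : List V} (h : s(z, w) ∈ pl l) : s(w, z) ∈ pl l := by
  rw [show s(w, z) = s(z, w) from Sym2.eq_swap]
  exact h

lemma masterU (H : SimpleGraph V) (u v : V) (hne : u ≠ v) (hnadj : ¬H.Adj u v) {b : V}
    {p : (H ⊔ SimpleGraph.fromEdgeSet {s(u, v)}).Walk u b}
    (hmax : IsMaximalPath (H ⊔ SimpleGraph.fromEdgeSet {s(u, v)}) p)
    (huv : s(u, v) ∉ p.edges)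
    (hnotin : {e | e ∈ p.edges} ∉ maximalPathEdgeSets H) :
    {e | e ∈ p.edges} ∈ Abkt (H ⊔ SimpleGraph.fromEdgeSet {s(u, v)}) u v ∨
    (∃ x, H.Adj u x ∧ deg H u ≤ 2 ∧
      {e | e ∈ p.edges} ∈ germ (H ⊔ SimpleGraph.fromEdgeSet {s(u, v)}) u x) ∨
    (∃ y, H.Adj v y ∧ deg H v ≤ 2 ∧
      {e | e ∈ p.edges} ∈ germ (H ⊔ SimpleGraph.fromEdgeSet {s(u, v)}) v y) := by
  have hm := mp_of_isMaximalPath hmax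
  have hseq : {e | e ∈ p.edges} = pset p.support := by
    unfold pset
    rw [walk_edges_eq_pl]
  obtain ⟨x, t, hxt⟩ := second hm
  have hpl_uv : s(u, v) ∉ pl p.support := by rwa [walk_edges_eq_pl] at huv
  have hxv : x ≠ v := by
    rintro rfl
    exact hpl_uv (mem_pl_of_split (l₁ := []) (by simpa using hxt))
  have hadjux : (H ⊔ SimpleGraph.fromEdgeSet {s(u, v)}).Adj u x := by
    have hch := hm.chain
    rw [hxt] at hch
    exact (List.isChain_cons_cons.mp hch).1
  have hHux : H.Adj u x := by
    rcases (adj_iff H u v hne).mp hadjux with h | ⟨-, h⟩ | ⟨h, -⟩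
    · exact h
    · exact absurd h hxv
    · exact absurd h hne
  by_cases hdu : deg H u ≤ 2
  · exact Or.inr (Or.inl ⟨x, hHux, hdu, ⟨b, t, hxt ▸ hm, by rw [hseq, hxt]⟩⟩)
  · have hdu3 : 3 ≤ deg H u := by omega
    by_cases hv : v ∈ p.support
    · obtain ⟨k₁, k₂, hk⟩ := List.append_of_mem hv
      by_cases hk1 : k₁ = []
      · exfalso
        subst hk1
        have := hm.hd
        rw [hk] at this
        simp at this
        exact hne this.symm
      by_cases hk2 : k₂ = []
      · have hvb : v = b := by
          have := hm.lst
          rw [hk, hk2] at this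
          simpa using this
        by_cases hdv : deg H v ≤ 2
        · subst hvb
          have hmr := hm.reverse
          obtain ⟨y, t', hyt⟩ := second hmr
          have hyu : y ≠ u := by
            rintro rfl
            exact hpl_uv (swap_mem_pl (mem_pl_reverse.mp
              (mem_pl_of_split (l₁ := []) (by simpa using hyt))))
          have hadjvy : (H ⊔ SimpleGraph.fromEdgeSet {s(u, v)}).Adj v y := by
            have hch := hmr.chain
            rw [hyt] at hch
            exact (List.isChain_cons_cons.mp hch).1
          have hHvy : H.Adj v y := by
            rcases (adj_iff H u v hne).mp hadjvy with h | ⟨h, -⟩ | ⟨-, h⟩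
            · exact h
            · exact absurd h hne.symm
            · exact absurd h hyu
          refine Or.inr (Or.inr ⟨y, hHvy, hdv, ⟨u, t', hyt ▸ hmr, ?_⟩⟩)
          rw [hseq, ← pset_reverse, hyt]
        · have hdv3 : 3 ≤ deg H v := by omega
          exact absurd (transfer_max H u v hne hnadj hmax huv
            (fun _ => ⟨Or.inl rfl, hdu3⟩) (fun _ => ⟨Or.inr hvb, hdv3⟩)) hnotin
      · exfalso
        have hadjvu : (H ⊔ SimpleGraph.fromEdgeSet {s(u, v)}).Adj v u :=
          (adj_iff H u v hne).mpr (Or.inr (Or.inr ⟨rfl, rfl⟩))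
        exact hpl_uv (swap_mem_pl (int_mem hm hk hk1 hk2 hadjvu))
    · exact absurd (transfer_max H u v hne hnadj hmax huv
        (fun _ => ⟨Or.inl rfl, hdu3⟩) (fun hv' => absurd hv' hv)) hnotin

lemma master (H : SimpleGraph V) (u v : V) (hne : u ≠ v) (hnadj : ¬H.Adj u v)
    {s : Set (Sym2 V)}
    (hs : s ∈ maximalPathEdgeSets (H ⊔ SimpleGraph.fromEdgeSet {s(u, v)}))
    (hnotin : s ∉ maximalPathEdgeSets H) :
    s ∈ Abkt (H ⊔ SimpleGraph.fromEdgeSet {s(u, v)}) u v ∨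
    (∃ x, H.Adj u x ∧ deg H u ≤ 2 ∧
      s ∈ germ (H ⊔ SimpleGraph.fromEdgeSet {s(u, v)}) u x) ∨
    (∃ y, H.Adj v y ∧ deg H v ≤ 2 ∧
      s ∈ germ (H ⊔ SimpleGraph.fromEdgeSet {s(u, v)}) v y) := by
  obtain ⟨a, b, p, hmax, rfl⟩ := hs
  have hm := mp_of_isMaximalPath hmax
  have hseq : {e | e ∈ p.edges} = pset p.support := by
    unfold pset
    rw [walk_edges_eq_pl]
  by_cases huv : s(u, v) ∈ p.edges
  · left
    rw [hseq]
    exact to_A hm (by rwa [walk_edges_eq_pl] at huv)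
  have hpl_uv : s(u, v) ∉ pl p.support := by rwa [walk_edges_eq_pl] at huv
  have hadjuv : (H ⊔ SimpleGraph.fromEdgeSet {s(u, v)}).Adj u v :=
    (adj_iff H u v hne).mpr (Or.inr (Or.inl ⟨rfl, rfl⟩))
  by_cases hu : u ∈ p.support
  · obtain ⟨l₁, l₂, hl⟩ := List.append_of_mem hu
    by_cases h1 : l₁ = []
    · subst h1
      have ha : u = a := by
        have := hm.hd
        rw [hl] at this
        simpa using this
      subst ha
      exact masterU H u v hne hnadj hmax huv hnotin
    by_cases h2 : l₂ = []
    · have hb : u = b := by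
        have := hm.lst
        rw [hl, h2] at this
        simpa using this
      subst hb
      have hmaxr := isMaximalPath_reverse hmax
      have hEq : {e | e ∈ p.reverse.edges} = {e | e ∈ p.edges} := by
        ext e
        simp
      have huvr : s(u, v) ∉ p.reverse.edges := by simpa using huv
      have hnotinr : {e | e ∈ p.reverse.edges} ∉ maximalPathEdgeSets H := by
        rwa [hEq]
      have := masterU H u v hne hnadj hmaxr huvr hnotinr
      rwa [hEq] at this
    · exact absurd (int_mem hm hl h1 h2 hadjuv) hpl_uv
  by_cases hvs : v ∈ p.support
  · obtain ⟨k₁, k₂, hk⟩ := List.append_of_mem hvs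
    by_cases hk1 : k₁ = []
    · -- v = a : endpoint
      subst hk1
      have ha : v = a := by
        have := hm.hd
        rw [hk] at this
        simpa using this
      subst ha
      obtain ⟨y, t', hyt⟩ := second hm
      have hyu : y ≠ u := by
        rintro rfl
        exact hu (by rw [hyt]; simp)
      have hadjvy : (H ⊔ SimpleGraph.fromEdgeSet {s(u, v)}).Adj v y := by
        have hch := hm.chain
        rw [hyt] at hch
        exact (List.isChain_cons_cons.mp hch).1
      have hHvy : H.Adj v y := by
        rcases (adj_iff H u v hne).mp hadjvy with h | ⟨h, -⟩ | ⟨-, h⟩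
        · exact h
        · exact absurd h hne.symm
        · exact absurd h hyu
      by_cases hdv : deg H v ≤ 2
      · exact Or.inr (Or.inr ⟨y, hHvy, hdv, ⟨b, t', hyt ▸ hm, by rw [hseq, hyt]⟩⟩)
      · have hdv3 : 3 ≤ deg H v := by omega
        exact absurd (transfer_max H u v hne hnadj hmax huv
          (fun hu' => absurd hu' hu) (fun _ => ⟨Or.inl rfl, hdv3⟩)) hnotin
    by_cases hk2 : k₂ = []
    · have hb : v = b := by
        have := hm.lst
        rw [hk, hk2] at this
        simpa using this
      subst hb
      have hmr := hm.reverse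
      obtain ⟨y, t', hyt⟩ := second hmr
      have hyu : y ≠ u := by
        intro hyu'
        apply hu
        have hmem : y ∈ p.support.reverse := by rw [hyt]; simp
        rw [hyu'] at hmem
        simpa using hmem
      have hadjvy : (H ⊔ SimpleGraph.fromEdgeSet {s(u, v)}).Adj v y := by
        have hch := hmr.chain
        rw [hyt] at hch
        exact (List.isChain_cons_cons.mp hch).1
      have hHvy : H.Adj v y := by
        rcases (adj_iff H u v hne).mp hadjvy with h | ⟨h, -⟩ | ⟨-, h⟩
        · exact h
        · exact absurd h hne.symm
        · exact absurd h hyu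
      by_cases hdv : deg H v ≤ 2
      · refine Or.inr (Or.inr ⟨y, hHvy, hdv, ⟨a, t', hyt ▸ hmr, ?_⟩⟩)
        rw [hseq, ← pset_reverse, hyt]
      · have hdv3 : 3 ≤ deg H v := by omega
        exact absurd (transfer_max H u v hne hnadj hmax huv
          (fun hu' => absurd hu' hu) (fun _ => ⟨Or.inr rfl, hdv3⟩)) hnotin
    · exact absurd (swap_mem_pl (int_mem hm hk hk1 hk2 hadjuv.symm)) hpl_uv
  · exact absurd (transfer_max H u v hne hnadj hmax huv
      (fun hu' => absurd hu' hu) (fun hv' => absurd hv' hvs)) hnotin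

lemma Abkt_sub_u {G : SimpleGraph V} {u v : V} (hdu : deg G u ≠ 2) :
    Abkt G u v ⊆ germ G u v := by
  rintro s ⟨a, b, h, t, m, rfl⟩
  cases h with
  | nil =>
    have ha : u = a := by simpa using m.hd
    subst ha
    exact ⟨b, t, m, rfl⟩
  | cons c h' =>
    exfalso
    exact hdu (m.inner_split (l₁ := c :: h') (l₂ := v :: t) rfl (by simp) (by simp))

lemma Abkt_sub_v {G : SimpleGraph V} {u v : V} (hdv : deg G v ≠ 2) :
    Abkt G u v ⊆ germ G v u := by
  rintro s ⟨a, b, h, t, m, rfl⟩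
  cases t with
  | nil =>
    have hrev : (h ++ u :: v :: ([] : List V)).reverse = v :: u :: h.reverse := by simp
    have mr := m.reverse
    rw [hrev] at mr
    have hb : v = b := by simpa using mr.hd
    subst hb
    exact ⟨a, h.reverse, mr, by rw [← pset_reverse, hrev]⟩
  | cons d t' =>
    exfalso
    refine hdv (m.inner_split (l₁ := h ++ [u]) (l₂ := d :: t') ?_ (by simp) (by simp))
    simp

lemma biUnion_germ_le (G : SimpleGraph V) (w : V) (S : Set V) (hS : S.ncard ≤ 2) :
    (⋃ x ∈ S, germ G w x).ncard ≤ S.ncard := by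
  have g1 : ∀ x, (germ G w x).ncard ≤ 1 :=
    fun x => (Set.ncard_le_one (Set.toFinite _)).mpr
      (fun a ha b hb => germ_sub G w x ha hb)
  interval_cases h : S.ncard
  · rw [(Set.ncard_eq_zero (Set.toFinite _)).mp h]
    simp
  · obtain ⟨a, rfl⟩ := Set.ncard_eq_one.mp h
    rw [Set.biUnion_singleton]
    exact (g1 a).trans (by omega)
  · obtain ⟨a, b, hab, rfl⟩ := Set.ncard_eq_two.mp h
    rw [Set.biUnion_pair]
    calc (germ G w a ∪ germ G w b).ncard ≤ (germ G w a).ncard + (germ G w b).ncard :=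
        Set.ncard_union_le _ _
      _ ≤ 2 := by have := g1 a; have := g1 b; omega

lemma count_cover {M M' C : Set (Set (Sym2 V))} (h : ∀ s ∈ M', s ∈ M ∪ C)
    (hC : C.ncard ≤ 5) : M'.ncard ≤ M.ncard + 5 :=
  calc M'.ncard ≤ (M ∪ C).ncard := Set.ncard_le_ncard (fun s hs => h s hs) (Set.toFinite _)
    _ ≤ M.ncard + C.ncard := Set.ncard_union_le _ _
    _ ≤ M.ncard + 5 := by omega

end Main

end MPaux

open MPaux

/-- Inserting one new edge into a graph increases the number of maximal paths by at most
five. -/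
theorem maximalPath_count_insert_edge {V : Type*} [Fintype V] (H : SimpleGraph V)
    (u v : V) (hne : u ≠ v) (hnadj : ¬ H.Adj u v) :
    (maximalPathEdgeSets (H ⊔ SimpleGraph.fromEdgeSet {s(u, v)})).ncard ≤
      (maximalPathEdgeSets H).ncard + 5 := by
  classical
  have hnadj' : ¬H.Adj v u := fun h => hnadj h.symm
  have hdegu : deg (H ⊔ SimpleGraph.fromEdgeSet {s(u, v)}) u = deg H u + 1 :=
    deg_u H u v hne hnadj
  have hdegv : deg (H ⊔ SimpleGraph.fromEdgeSet {s(u, v)}) v = deg H v + 1 := by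
    rw [sup_comm' H u v]
    exact deg_u H v u hne.symm hnadj'
  set Su : Set V := {x : V | H.Adj u x ∧ deg H u ≤ 2} with hSu
  set Sv : Set V := {y : V | H.Adj v y ∧ deg H v ≤ 2} with hSv
  have hSuN : Su ⊆ H.neighborSet u := fun x hx => hx.1
  have hSvN : Sv ⊆ H.neighborSet v := fun y hy => hy.1
  have hSud : Su.ncard ≤ deg H u := Set.ncard_le_ncard hSuN (Set.toFinite _)
  have hSvd : Sv.ncard ≤ deg H v := Set.ncard_le_ncard hSvN (Set.toFinite _)
  have hSu2 : Su.ncard ≤ 2 := by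
    by_cases h : deg H u ≤ 2
    · omega
    · have hemp : Su = ∅ := by
        ext x
        simp only [hSu, Set.mem_setOf_eq, Set.mem_empty_iff_false, iff_false, not_and]
        intro _
        omega
      rw [hemp]
      simp
  have hSv2 : Sv.ncard ≤ 2 := by
    by_cases h : deg H v ≤ 2
    · omega
    · have hemp : Sv = ∅ := by
        ext y
        simp only [hSv, Set.mem_setOf_eq, Set.mem_empty_iff_false, iff_false, not_and]
        intro _
        omega
      rw [hemp]
      simp
  have hU := biUnion_germ_le (H ⊔ SimpleGraph.fromEdgeSet {s(u, v)}) u Su hSu2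
  have hV := biUnion_germ_le (H ⊔ SimpleGraph.fromEdgeSet {s(u, v)}) v Sv hSv2
  have hgerm1 : ∀ (w x : V),
      (germ (H ⊔ SimpleGraph.fromEdgeSet {s(u, v)}) w x).ncard ≤ 1 :=
    fun w x => (Set.ncard_le_one (Set.toFinite _)).mpr (fun a ha b hb => germ_sub _ _ _ ha hb)
  have hAcard : (Abkt (H ⊔ SimpleGraph.fromEdgeSet {s(u, v)}) u v).ncard ≤ 2 :=
    Acard _ u v
  -- three-set union bound
  have tri : ∀ (X Y Z : Set (Set (Sym2 V))), (X ∪ Y ∪ Z).ncard ≤ X.ncard + Y.ncard + Z.ncard := by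
    intro X Y Z
    calc (X ∪ Y ∪ Z).ncard ≤ (X ∪ Y).ncard + Z.ncard := Set.ncard_union_le _ _
      _ ≤ X.ncard + Y.ncard + Z.ncard := by
          have := Set.ncard_union_le X Y
          omega
  by_cases hdu1 : deg H u = 1
  · by_cases hdv1 : deg H v = 1
    · -- both degree one
      refine count_cover (C := Abkt (H ⊔ SimpleGraph.fromEdgeSet {s(u, v)}) u v ∪
        (⋃ x ∈ Su, germ (H ⊔ SimpleGraph.fromEdgeSet {s(u, v)}) u x) ∪
        (⋃ y ∈ Sv, germ (H ⊔ SimpleGraph.fromEdgeSet {s(u, v)}) v y)) ?_ ?_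
      · intro s hs
        by_cases hsM : s ∈ maximalPathEdgeSets H
        · exact Or.inl hsM
        rcases master H u v hne hnadj hs hsM with hA | ⟨x, hx, hd, hg⟩ | ⟨y, hy, hd, hg⟩
        · exact Or.inr (Or.inl (Or.inl hA))
        · exact Or.inr (Or.inl (Or.inr (Set.mem_biUnion (⟨hx, hd⟩ : x ∈ Su) hg)))
        · exact Or.inr (Or.inr (Set.mem_biUnion (⟨hy, hd⟩ : y ∈ Sv) hg))
      · have := tri (Abkt (H ⊔ SimpleGraph.fromEdgeSet {s(u, v)}) u v)
          (⋃ x ∈ Su, germ (H ⊔ SimpleGraph.fromEdgeSet {s(u, v)}) u x)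
          (⋃ y ∈ Sv, germ (H ⊔ SimpleGraph.fromEdgeSet {s(u, v)}) v y)
        omega
    · -- deg H u = 1, deg H v ≠ 1
      refine count_cover (C := germ (H ⊔ SimpleGraph.fromEdgeSet {s(u, v)}) v u ∪
        (⋃ x ∈ Su, germ (H ⊔ SimpleGraph.fromEdgeSet {s(u, v)}) u x) ∪
        (⋃ y ∈ Sv, germ (H ⊔ SimpleGraph.fromEdgeSet {s(u, v)}) v y)) ?_ ?_
      · intro s hs
        by_cases hsM : s ∈ maximalPathEdgeSets H
        · exact Or.inl hsM
        rcases master H u v hne hnadj hs hsM with hA | ⟨x, hx, hd, hg⟩ | ⟨y, hy, hd, hg⟩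
        · exact Or.inr (Or.inl (Or.inl (Abkt_sub_v (by omega) hA)))
        · exact Or.inr (Or.inl (Or.inr (Set.mem_biUnion (⟨hx, hd⟩ : x ∈ Su) hg)))
        · exact Or.inr (Or.inr (Set.mem_biUnion (⟨hy, hd⟩ : y ∈ Sv) hg))
      · have := tri (germ (H ⊔ SimpleGraph.fromEdgeSet {s(u, v)}) v u)
          (⋃ x ∈ Su, germ (H ⊔ SimpleGraph.fromEdgeSet {s(u, v)}) u x)
          (⋃ y ∈ Sv, germ (H ⊔ SimpleGraph.fromEdgeSet {s(u, v)}) v y)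
        have := hgerm1 v u
        omega
  · -- deg H u ≠ 1
    refine count_cover (C := germ (H ⊔ SimpleGraph.fromEdgeSet {s(u, v)}) u v ∪
      (⋃ x ∈ Su, germ (H ⊔ SimpleGraph.fromEdgeSet {s(u, v)}) u x) ∪
      (⋃ y ∈ Sv, germ (H ⊔ SimpleGraph.fromEdgeSet {s(u, v)}) v y)) ?_ ?_
    · intro s hs
      by_cases hsM : s ∈ maximalPathEdgeSets H
      · exact Or.inl hsM
      rcases master H u v hne hnadj hs hsM with hA | ⟨x, hx, hd, hg⟩ | ⟨y, hy, hd, hg⟩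
      · exact Or.inr (Or.inl (Or.inl (Abkt_sub_u (by omega) hA)))
      · exact Or.inr (Or.inl (Or.inr (Set.mem_biUnion (⟨hx, hd⟩ : x ∈ Su) hg)))
      · exact Or.inr (Or.inr (Set.mem_biUnion (⟨hy, hd⟩ : y ∈ Sv) hg))
    · have := tri (germ (H ⊔ SimpleGraph.fromEdgeSet {s(u, v)}) u v)
        (⋃ x ∈ Su, germ (H ⊔ SimpleGraph.fromEdgeSet {s(u, v)}) u x)
        (⋃ y ∈ Sv, germ (H ⊔ SimpleGraph.fromEdgeSet {s(u, v)}) v y)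
      have := hgerm1 u v
      omega
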